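/- Let P = h·λ^d with compact support, ‖h‖_∞ < ∞, and suppose d(x, α_n) ≤ c₁₃ n^{−1/d} for all x ∈ supp(P) and all n. Then for all n and all a ∈ α_n: P(W(a|α_n)) ≤ c₁₄/n and ∫_{W(a|α_n)} ‖x−a‖^r dP(x) ≤ c₁₅ n^{−(1+r/d)}, with c₁₄ = ‖h‖_∞ λ^d(B(0,1)) c₁₃^d and c₁₅ = c₁₄ c₁₃^r. -/

import Mathlib

open MeasureTheory Metric

/-- The support of a Borel measure. -/
def msupport {d : ℕ} (P : Measure (EuclideanSpace ℝ (Fin d))) : Set (EuclideanSpace ℝ (Fin d)) :=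
  {x | ∀ ε > 0, 0 < P (ball x ε)}

theorem msupport_compl_null {d : ℕ} (P : Measure (EuclideanSpace ℝ (Fin d))) :
    P (msupport P)ᶜ = 0 := by
  apply measure_null_of_locally_null
  intro x hx
  simp only [msupport, Set.mem_compl_iff, Set.mem_setOf_eq, not_forall] at hx
  obtain ⟨ε, hε, h0⟩ := hx
  refine ⟨ball x ε, mem_nhdsWithin_of_mem_nhds (ball_mem_nhds x hε), ?_⟩
  exact le_antisymm (not_lt.1 h0) zero_le'

theorem msupport_isClosed {d : ℕ} (P : Measure (EuclideanSpace ℝ (Fin d))) :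
    IsClosed (msupport P) := by
  rw [← isOpen_compl_iff, Metric.isOpen_iff]
  intro x hx
  simp only [msupport, Set.mem_compl_iff, Set.mem_setOf_eq, not_forall] at hx
  obtain ⟨ε, hε, h0⟩ := hx
  have hPx : P (ball x ε) = 0 := le_antisymm (not_lt.1 h0) zero_le'
  refine ⟨ε / 2, by positivity, fun y hy => ?_⟩
  simp only [msupport, Set.mem_compl_iff, Set.mem_setOf_eq, not_forall]
  refine ⟨ε / 2, by positivity, ?_⟩
  have hsub : ball y (ε / 2) ⊆ ball x ε := by
    apply ball_subset_ball'
    have : dist y x < ε / 2 := mem_ball.1 hy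
    linarith
  have : P (ball y (ε / 2)) = 0 := measure_mono_null hsub hPx
  simp [this]

/-- if `d(x,α_n) ≤ c₁₃ n^{−1/d}` on the compact support of `P = h·λ^d` with
`h ≤ M`, then each Voronoi cell satisfies `P(W(a|α_n)) ≤ c₁₄/n` and
`∫_{W(a|α_n)} ‖x−a‖^r dP ≤ c₁₅ n^{−(1+r/d)}`, with
`c₁₄ = M λ^d(B(0,1)) c₁₃^d` and `c₁₅ = c₁₄ c₁₃^r`. -/
theorem stmt14 (d : ℕ) (hd : 0 < d) (r : ℝ) (hr : 0 < r)
    (h : EuclideanSpace ℝ (Fin d) → ℝ) (hmeas : Measurable h) (hnn : ∀ x, 0 ≤ h x)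
    (M : ℝ) (hM : ∀ x, h x ≤ M)
    (P : Measure (EuclideanSpace ℝ (Fin d)))
    (hP : P = volume.withDensity (fun x => ENNReal.ofReal (h x)))
    [IsProbabilityMeasure P]
    (hKcpt : IsCompact (msupport P))
    (α : ℕ → Finset (EuclideanSpace ℝ (Fin d)))
    (c₁₃ : ℝ) (hc₁₃ : 0 < c₁₃)
    (hdist : ∀ n : ℕ, 1 ≤ n → ∀ x ∈ msupport P,
      infDist x ((α n : Set (EuclideanSpace ℝ (Fin d)))) ≤ c₁₃ * (n : ℝ) ^ (-(1 / (d : ℝ)))) :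
    ∀ n : ℕ, 1 ≤ n → ∀ a ∈ α n,
      P {x | ‖x - a‖ = infDist x ((α n : Set (EuclideanSpace ℝ (Fin d))))} ≤
        ENNReal.ofReal
          (M * (volume (ball (0 : EuclideanSpace ℝ (Fin d)) 1)).toReal * c₁₃ ^ (d : ℝ) / n) ∧
      ∫ x in {x | ‖x - a‖ = infDist x ((α n : Set (EuclideanSpace ℝ (Fin d))))},
          ‖x - a‖ ^ r ∂P ≤
        M * (volume (ball (0 : EuclideanSpace ℝ (Fin d)) 1)).toReal * c₁₃ ^ (d : ℝ) * c₁₃ ^ r *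
          (n : ℝ) ^ (-(1 + r / d)) := by
  intro n hn a ha
  have hn0 : (0 : ℝ) < n := by exact_mod_cast hn
  have hd0 : (d : ℝ) ≠ 0 := Nat.cast_ne_zero.2 hd.ne'
  set V : ℝ := (volume (ball (0 : EuclideanSpace ℝ (Fin d)) 1)).toReal with hV
  have hVfin : volume (ball (0 : EuclideanSpace ℝ (Fin d)) 1) ≠ ⊤ := measure_ball_lt_top.ne
  have hMnn : (0 : ℝ) ≤ M := le_trans (hnn 0) (hM 0)
  set K : Set (EuclideanSpace ℝ (Fin d)) := (α n : Set (EuclideanSpace ℝ (Fin d)))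
  set R : ℝ := c₁₃ * (n : ℝ) ^ (-(1 / (d : ℝ))) with hR
  have hR0 : 0 < R := by positivity
  set W : Set (EuclideanSpace ℝ (Fin d)) := {x | ‖x - a‖ = infDist x K} with hWdef
  set S : Set (EuclideanSpace ℝ (Fin d)) := msupport P with hS
  have hsub : W ∩ S ⊆ closedBall a R := by
    rintro x ⟨hxW, hxS⟩
    rw [mem_closedBall, dist_eq_norm]
    have hxW' : ‖x - a‖ = infDist x K := hxW
    rw [hxW']
    exact hdist n hn x hxS
  have hRd : R ^ d = c₁₃ ^ d * (n : ℝ)⁻¹ := by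
    rw [hR, mul_pow]
    congr 1
    rw [← Real.rpow_natCast ((n : ℝ) ^ (-(1 / (d : ℝ)))) d, ← Real.rpow_mul hn0.le]
    rw [show (-(1 / (d : ℝ))) * d = -1 by field_simp]
    exact Real.rpow_neg_one _
  have hbound : (0 : ℝ) ≤ M * V * c₁₃ ^ (d : ℝ) / n := by
    apply div_nonneg _ hn0.le
    exact mul_nonneg (mul_nonneg hMnn ENNReal.toReal_nonneg) (Real.rpow_nonneg hc₁₃.le _)
  have hPball : P (closedBall a R) ≤ ENNReal.ofReal (M * V * c₁₃ ^ (d : ℝ) / n) := by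
    rw [hP, withDensity_apply _ measurableSet_closedBall]
    calc ∫⁻ x in closedBall a R, ENNReal.ofReal (h x) ∂volume
        ≤ ∫⁻ _ in closedBall a R, ENNReal.ofReal M ∂volume :=
          lintegral_mono fun x => ENNReal.ofReal_le_ofReal (hM x)
      _ = ENNReal.ofReal M * volume (closedBall a R) := setLIntegral_const _ _
      _ = ENNReal.ofReal M * (ENNReal.ofReal (R ^ d) *
            volume (ball (0 : EuclideanSpace ℝ (Fin d)) 1)) := by
          rw [Measure.addHaar_closedBall _ _ hR0.le, finrank_euclideanSpace_fin]
      _ = ENNReal.ofReal (M * V * c₁₃ ^ (d : ℝ) / n) := by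
          rw [← ENNReal.ofReal_toReal hVfin, ← hV,
            ← ENNReal.ofReal_mul (by positivity), ← ENNReal.ofReal_mul hMnn]
          congr 1
          rw [hRd, Real.rpow_natCast]
          ring
  have hcompl : P Sᶜ = 0 := msupport_compl_null P
  have hWsplit : P W ≤ P (W ∩ S) := by
    calc P W ≤ P ((W ∩ S) ∪ Sᶜ) := by
          apply measure_mono
          intro x hx
          by_cases hxS : x ∈ S
          · exact Or.inl ⟨hx, hxS⟩
          · exact Or.inr hxS
      _ ≤ P (W ∩ S) + P Sᶜ := measure_union_le _ _
      _ = P (W ∩ S) := by rw [hcompl, add_zero]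
  have hPW : P W ≤ ENNReal.ofReal (M * V * c₁₃ ^ (d : ℝ) / n) :=
    hWsplit.trans ((measure_mono hsub).trans hPball)
  refine ⟨hPW, ?_⟩
  -- integral part
  have hWclosed : IsClosed W :=
    isClosed_eq ((continuous_id.sub continuous_const).norm) (continuous_infDist_pt K)
  have hT : MeasurableSet (W ∩ S) :=
    (hWclosed.inter (msupport_isClosed P)).measurableSet
  have haeeq : W =ᵐ[P] (W ∩ S : Set (EuclideanSpace ℝ (Fin d))) := by
    rw [Filter.eventuallyEq_set]
    have : ∀ᵐ x ∂P, x ∈ S := by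
      rw [ae_iff]
      exact measure_mono_null (fun x hx => hx) hcompl
    filter_upwards [this] with x hxS
    exact ⟨fun hw => ⟨hw, hxS⟩, fun hw => hw.1⟩
  rw [setIntegral_congr_set haeeq]
  have hle : ∀ x ∈ W ∩ S, ‖x - a‖ ≤ R := fun x hx => by
    have := hsub hx
    rwa [mem_closedBall, dist_eq_norm] at this
  have hRr : (0 : ℝ) ≤ R ^ r := Real.rpow_nonneg hR0.le r
  have key : ∫ x in W ∩ S, ‖x - a‖ ^ r ∂P ≤ R ^ r * (P (W ∩ S)).toReal := by
    have hnorm : ‖∫ x in W ∩ S, ‖x - a‖ ^ r ∂P‖ ≤ R ^ r * (P (W ∩ S)).toReal := by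
      apply norm_setIntegral_le_of_norm_le_const (measure_lt_top P _)
      intro x hx
      rw [Real.norm_eq_abs, abs_of_nonneg (Real.rpow_nonneg (norm_nonneg _) r)]
      exact Real.rpow_le_rpow (norm_nonneg _) (hle x hx) hr.le
    calc ∫ x in W ∩ S, ‖x - a‖ ^ r ∂P ≤ ‖∫ x in W ∩ S, ‖x - a‖ ^ r ∂P‖ :=
          le_abs_self _
      _ ≤ R ^ r * (P (W ∩ S)).toReal := hnorm
  have hPT : (P (W ∩ S)).toReal ≤ M * V * c₁₃ ^ (d : ℝ) / n := by
    apply ENNReal.toReal_le_of_le_ofReal hbound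
    exact (measure_mono hsub).trans hPball
  calc ∫ x in W ∩ S, ‖x - a‖ ^ r ∂P ≤ R ^ r * (P (W ∩ S)).toReal := key
    _ ≤ R ^ r * (M * V * c₁₃ ^ (d : ℝ) / n) := mul_le_mul_of_nonneg_left hPT hRr
    _ = M * V * c₁₃ ^ (d : ℝ) * c₁₃ ^ r * (n : ℝ) ^ (-(1 + r / d)) := by
        rw [hR, Real.mul_rpow hc₁₃.le (Real.rpow_nonneg hn0.le _),
          ← Real.rpow_mul hn0.le,
          show (-(1 / (d : ℝ))) * r = -(r / d) by ring,
          show -(1 + r / d) = (-(r / d)) + (-1) by ring,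
          Real.rpow_add hn0, Real.rpow_neg_one]
        ring
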